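/- Let X be a compact metric space and Γ a nonempty compact subset of the space of Borel probability measures on X equipped with the topology of weak convergence. For u in the Banach space C(X, ℝ) of continuous real-valued functions on X with the supremum norm, the maximum max_{γ ∈ Γ} ∫_X u dγ is attained. Then the set {u ∈ C(X, ℝ) : the set of γ ∈ Γ attaining max_{γ' ∈ Γ} ∫_X u dγ' is not a singleton} is meagre in C(X, ℝ). -/

import Mathlib

open MeasureTheory Filter Topology Set

noncomputable section Stmt10Aux
set_option linter.unusedSectionVars false

variable {X : Type*} [MetricSpace X] [CompactSpace X] [MeasurableSpace X] [BorelSpace X]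

/-- The pairing between continuous functions and probability measures. -/
def st10phi (u : C(X, ℝ)) (γ : ProbabilityMeasure X) : ℝ := ∫ x, u x ∂(γ : Measure X)

lemma st10phi_cont (u : C(X, ℝ)) : Continuous (st10phi u) := by
  have := ProbabilityMeasure.continuous_integral_boundedContinuousFunction
    (X := X) (BoundedContinuousFunction.mkOfCompact u)
  exact this

lemma st10_abs_phi_le (u : C(X, ℝ)) (γ : ProbabilityMeasure X) : |st10phi u γ| ≤ ‖u‖ := by
  have h := BoundedContinuousFunction.norm_integral_le_norm (μ := (γ : Measure X))
    (BoundedContinuousFunction.mkOfCompact u)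
  simpa [st10phi, Real.norm_eq_abs] using h

lemma st10_integrable (u : C(X, ℝ)) (γ : ProbabilityMeasure X) :
    Integrable u (γ : Measure X) := by
  exact (BoundedContinuousFunction.mkOfCompact u).integrable (γ : Measure X)

lemma st10phi_sub (u v : C(X, ℝ)) (γ : ProbabilityMeasure X) :
    |st10phi u γ - st10phi v γ| ≤ ‖u - v‖ := by
  have h : st10phi u γ - st10phi v γ = st10phi (u - v) γ := by
    simp only [st10phi, ContinuousMap.sub_apply]
    rw [integral_sub (st10_integrable u γ) (st10_integrable v γ)]
  rw [h]; exact st10_abs_phi_le _ _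

lemma st10phi_add_smul (u g : C(X, ℝ)) (t : ℝ) (γ : ProbabilityMeasure X) :
    st10phi (u + t • g) γ = st10phi u γ + t * st10phi g γ := by
  simp only [st10phi, ContinuousMap.add_apply, ContinuousMap.smul_apply, smul_eq_mul]
  rw [integral_add (st10_integrable u γ) ((st10_integrable g γ).const_mul t),
    MeasureTheory.integral_const_mul]

lemma st10_jointCont :
    Continuous (fun p : C(X, ℝ) × ProbabilityMeasure X => st10phi p.1 p.2) := by
  rw [continuous_iff_continuousAt]
  rintro ⟨u₀, γ₀⟩
  have h2 : Tendsto (fun p : C(X, ℝ) × ProbabilityMeasure X => st10phi u₀ p.2)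
      (𝓝 (u₀, γ₀)) (𝓝 (st10phi u₀ γ₀)) :=
    ((st10phi_cont u₀).comp continuous_snd).tendsto (u₀, γ₀)
  have hnorm : Tendsto (fun p : C(X, ℝ) × ProbabilityMeasure X => ‖p.1 - u₀‖)
      (𝓝 (u₀, γ₀)) (𝓝 0) := by
    have hc : Continuous (fun p : C(X, ℝ) × ProbabilityMeasure X => ‖p.1 - u₀‖) :=
      (continuous_fst.sub continuous_const).norm
    have := hc.tendsto (u₀, γ₀)
    simpa using this
  have h1 : Tendsto (fun p : C(X, ℝ) × ProbabilityMeasure X =>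
      st10phi p.1 p.2 - st10phi u₀ p.2) (𝓝 (u₀, γ₀)) (𝓝 0) := by
    apply squeeze_zero_norm _ hnorm
    intro p
    simpa [Real.norm_eq_abs] using st10phi_sub p.1 u₀ p.2
  have := h1.add h2
  rw [zero_add] at this
  refine this.congr (fun p => by ring)

/-- The value function. -/
def st10f (Γ : Set (ProbabilityMeasure X)) (u : C(X, ℝ)) : ℝ :=
  sSup ((fun γ => st10phi u γ) '' Γ)

lemma st10_bddAbove (Γ : Set (ProbabilityMeasure X)) (u : C(X, ℝ)) :
    BddAbove ((fun γ => st10phi u γ) '' Γ) := by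
  refine ⟨‖u‖, ?_⟩
  rintro _ ⟨γ, _, rfl⟩
  exact le_of_abs_le (st10_abs_phi_le u γ)

lemma st10_le_f {Γ : Set (ProbabilityMeasure X)} {γ : ProbabilityMeasure X} (hγ : γ ∈ Γ)
    (u : C(X, ℝ)) : st10phi u γ ≤ st10f Γ u :=
  le_csSup (st10_bddAbove Γ u) (mem_image_of_mem _ hγ)

lemma st10f_le {Γ : Set (ProbabilityMeasure X)} (hne : Γ.Nonempty) {u : C(X, ℝ)} {a : ℝ}
    (h : ∀ γ ∈ Γ, st10phi u γ ≤ a) : st10f Γ u ≤ a :=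
  csSup_le (hne.image _) (by rintro _ ⟨γ, hγ, rfl⟩; exact h γ hγ)

lemma st10f_cont {Γ : Set (ProbabilityMeasure X)} (hne : Γ.Nonempty) :
    Continuous (st10f Γ) := by
  have key : ∀ u v : C(X, ℝ), st10f Γ u ≤ st10f Γ v + ‖u - v‖ := by
    intro u v
    refine st10f_le hne (fun γ hγ => ?_)
    have h1 := st10phi_sub u v γ
    have h2 := st10_le_f hγ v
    have := abs_le.mp h1
    linarith [this.2]
  have lip : LipschitzWith 1 (st10f Γ) := by
    refine LipschitzWith.of_dist_le_mul (fun u v => ?_)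
    rw [Real.dist_eq, dist_eq_norm, NNReal.coe_one, one_mul]
    have h1 := key u v
    have h2 := key v u
    rw [abs_le]
    constructor
    · have : ‖v - u‖ = ‖u - v‖ := norm_sub_rev v u
      linarith [h2, this ▸ h2]
    · linarith
  exact lip.continuous

lemma st10_exists_max {Γ : Set (ProbabilityMeasure X)} (hne : Γ.Nonempty)
    (hcomp : IsCompact Γ) (u : C(X, ℝ)) : ∃ γ ∈ Γ, st10phi u γ = st10f Γ u := by
  obtain ⟨γ, hγ, h⟩ := hcomp.exists_sSup_image_eq hne (st10phi_cont u).continuousOn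
  exact ⟨γ, hγ, h.symm⟩

/-- The monotonicity ("chain") lemma: maximizers at larger tilt parameters have
larger `g`-integral. -/
lemma st10_chain {Γ : Set (ProbabilityMeasure X)} {u g : C(X, ℝ)} {s t : ℝ} (hst : s < t)
    {γ γ' : ProbabilityMeasure X} (hγΓ : γ ∈ Γ) (hγ'Γ : γ' ∈ Γ)
    (hγ : st10phi (u + s • g) γ = st10f Γ (u + s • g))
    (hγ' : st10phi (u + t • g) γ' = st10f Γ (u + t • g)) :
    st10phi g γ ≤ st10phi g γ' := by
  have h1 : st10phi (u + s • g) γ' ≤ st10phi (u + s • g) γ := hγ ▸ st10_le_f hγ'Γ _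
  have h2 : st10phi (u + t • g) γ ≤ st10phi (u + t • g) γ' := hγ' ▸ st10_le_f hγΓ _
  rw [st10phi_add_smul, st10phi_add_smul] at h1 h2
  nlinarith [h1, h2, hst]

/-- The exceptional set for direction `g` and gap `1/(n+1)`. -/
def st10E (Γ : Set (ProbabilityMeasure X)) (g : C(X, ℝ)) (n : ℕ) : Set C(X, ℝ) :=
  {u | ∃ γ₁ ∈ Γ, ∃ γ₂ ∈ Γ, st10phi u γ₁ = st10f Γ u ∧ st10phi u γ₂ = st10f Γ u ∧
    (1 : ℝ) / (n + 1) ≤ st10phi g γ₁ - st10phi g γ₂}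

lemma st10E_closed {Γ : Set (ProbabilityMeasure X)} (hne : Γ.Nonempty)
    (hcomp : IsCompact Γ) (g : C(X, ℝ)) (n : ℕ) : IsClosed (st10E Γ g n) := by
  haveI : CompactSpace ↥Γ := isCompact_iff_compactSpace.mp hcomp
  set K : Set (C(X, ℝ) × (↥Γ × ↥Γ)) :=
    {p | st10phi p.1 ↑p.2.1 = st10f Γ p.1 ∧ st10phi p.1 ↑p.2.2 = st10f Γ p.1 ∧
      (1 : ℝ) / (n + 1) ≤ st10phi g ↑p.2.1 - st10phi g ↑p.2.2} with hK
  have c1 : Continuous (fun p : C(X, ℝ) × (↥Γ × ↥Γ) => st10phi p.1 ↑p.2.1) :=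
    st10_jointCont.comp (continuous_fst.prodMk
      (continuous_subtype_val.comp (continuous_fst.comp continuous_snd)))
  have c2 : Continuous (fun p : C(X, ℝ) × (↥Γ × ↥Γ) => st10phi p.1 ↑p.2.2) :=
    st10_jointCont.comp (continuous_fst.prodMk
      (continuous_subtype_val.comp (continuous_snd.comp continuous_snd)))
  have cf : Continuous (fun p : C(X, ℝ) × (↥Γ × ↥Γ) => st10f Γ p.1) :=
    (st10f_cont hne).comp continuous_fst
  have cg1 : Continuous (fun p : C(X, ℝ) × (↥Γ × ↥Γ) => st10phi g ↑p.2.1) :=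
    (st10phi_cont g).comp (continuous_subtype_val.comp (continuous_fst.comp continuous_snd))
  have cg2 : Continuous (fun p : C(X, ℝ) × (↥Γ × ↥Γ) => st10phi g ↑p.2.2) :=
    (st10phi_cont g).comp (continuous_subtype_val.comp (continuous_snd.comp continuous_snd))
  have hKc : IsClosed K :=
    ((isClosed_eq c1 cf).inter ((isClosed_eq c2 cf).inter
      (isClosed_le continuous_const (cg1.sub cg2))))
  have himg : st10E Γ g n = Prod.fst '' K := by
    ext u
    constructor
    · rintro ⟨γ₁, h1, γ₂, h2, ha, hb, hc⟩
      exact ⟨(u, (⟨γ₁, h1⟩, ⟨γ₂, h2⟩)), ⟨ha, hb, hc⟩, rfl⟩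
    · rintro ⟨⟨v, ⟨γ₁, γ₂⟩⟩, ⟨ha, hb, hc⟩, rfl⟩
      exact ⟨γ₁, γ₁.2, γ₂, γ₂.2, ha, hb, hc⟩
  rw [himg]
  exact isClosedMap_fst_of_compactSpace _ hKc

lemma st10E_interior {Γ : Set (ProbabilityMeasure X)} (hne : Γ.Nonempty)
    (hcomp : IsCompact Γ) (g : C(X, ℝ)) (n : ℕ) : interior (st10E Γ g n) = ∅ := by
  by_contra h
  obtain ⟨u, hu⟩ := nonempty_iff_ne_empty.mpr h
  have hmem : st10E Γ g n ∈ 𝓝 u := mem_interior_iff_mem_nhds.mp hu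
  obtain ⟨ε, hε, hball⟩ := Metric.mem_nhds_iff.mp hmem
  -- g ≠ 0, since otherwise the gap condition is impossible
  have hgpos : 0 < ‖g‖ := by
    rcases eq_or_ne g 0 with rfl | hg
    · exfalso
      obtain ⟨γ₁, -, γ₂, -, -, -, hc⟩ := hball (Metric.mem_ball_self hε)
      have h0 : ∀ γ : ProbabilityMeasure X, st10phi (0 : C(X, ℝ)) γ = 0 := by
        intro γ; simp [st10phi]
      rw [h0, h0] at hc
      have : (0:ℝ) < 1 / (n + 1) := by positivity
      linarith
    · exact norm_pos_iff.mpr hg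
  set c : ℝ := (1 : ℝ) / (n + 1) with hc
  have hcpos : 0 < c := by positivity
  obtain ⟨N, hN⟩ := exists_nat_gt (2 * ‖g‖ / c)
  -- tilt parameters
  set t : ℕ → ℝ := fun i => ε * (i + 1) / ((N + 2) * ‖g‖) with ht
  have htpos : ∀ i : ℕ, 0 < t i := by
    intro i; apply div_pos (by positivity) (by positivity)
  have htmono : ∀ i j : ℕ, i < j → t i < t j := by
    intro i j hij
    have hD : (0:ℝ) < (N + 2) * ‖g‖ := by positivity
    simp only [ht]
    gcongr
  have htball : ∀ i : ℕ, i ≤ N → u + t i • g ∈ st10E Γ g n := by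
    intro i hi
    apply hball
    rw [Metric.mem_ball, dist_eq_norm]
    have : u + t i • g - u = t i • g := by abel
    rw [this, show ‖t i • g‖ = ‖t i‖ * ‖g‖ from norm_smul (t i) g,
      Real.norm_eq_abs, abs_of_pos (htpos i)]
    have h1 : t i * ‖g‖ = ε * (i + 1) / (N + 2) := by
      simp only [ht]
      rw [div_mul_eq_mul_div, mul_div_mul_right _ _ hgpos.ne']
    rw [h1]
    rw [div_lt_iff₀ (by positivity)]
    have : (i : ℝ) + 1 < (N : ℝ) + 2 := by
      have : (i : ℝ) ≤ N := Nat.cast_le.mpr hi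
      linarith
    nlinarith
  -- choose maximizer pairs
  have hch : ∀ i : ℕ, ∃ γ₁ γ₂ : ProbabilityMeasure X, i ≤ N →
      γ₁ ∈ Γ ∧ γ₂ ∈ Γ ∧ st10phi (u + t i • g) γ₁ = st10f Γ (u + t i • g) ∧
      st10phi (u + t i • g) γ₂ = st10f Γ (u + t i • g) ∧
      c ≤ st10phi g γ₁ - st10phi g γ₂ := by
    intro i
    by_cases hi : i ≤ N
    · obtain ⟨γ₁, h1, γ₂, h2, ha, hb, hcc⟩ := htball i hi
      exact ⟨γ₁, γ₂, fun _ => ⟨h1, h2, ha, hb, hcc⟩⟩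
    · exact ⟨hne.some, hne.some, fun h => absurd h hi⟩
  choose γ₁ γ₂ hγ using hch
  set b : ℕ → ℝ := fun i => st10phi g (γ₂ i) with hb
  have hstep : ∀ i : ℕ, i < N → b i + c ≤ b (i + 1) := by
    intro i hi
    obtain ⟨h1i, h2i, hai, hbi, hci⟩ := hγ i (le_of_lt hi)
    obtain ⟨h1s, h2s, has, hbs, hcs⟩ := hγ (i + 1) hi
    have hchain := st10_chain (Γ := Γ) (htmono i (i+1) (Nat.lt_succ_self i))
      h1i h2s hai hbs
    simp only [hb]
    linarith
  have hkey : ∀ i : ℕ, i ≤ N → b 0 + i * c ≤ b i := by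
    intro i
    induction i with
    | zero => intro _; simp
    | succ k ih =>
      intro hk
      have hk' : k ≤ N := Nat.le_of_succ_le hk
      have h1 := ih hk'
      have h2 := hstep k (Nat.lt_of_succ_le hk)
      push_cast
      linarith
  have hbN := hkey N le_rfl
  have hb0 : -‖g‖ ≤ b 0 := neg_le_of_abs_le (st10_abs_phi_le g (γ₂ 0))
  have hbN' : b N ≤ ‖g‖ := le_of_abs_le (st10_abs_phi_le g (γ₂ N))
  have : 2 * ‖g‖ < N * c := by
    rw [div_lt_iff₀ hcpos] at hN
    linarith
  linarith

/-- Distinct probability measures are distinguished by a continuous function. -/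
lemma st10_distinguish (γ₁ γ₂ : ProbabilityMeasure X) (hne : γ₁ ≠ γ₂) :
    ∃ h : C(X,ℝ), st10phi h γ₁ ≠ st10phi h γ₂ := by
  by_contra hcon
  push_neg at hcon
  apply hne
  apply ProbabilityMeasure.toMeasure_injective
  apply ext_of_forall_lintegral_eq_of_IsFiniteMeasure
  intro f
  have key := hcon ⟨fun x => (f x : ℝ), NNReal.continuous_coe.comp f.continuous⟩
  have h1 := BoundedContinuousFunction.toReal_lintegral_coe_eq_integral f (γ₁ : Measure X)
  have h2 := BoundedContinuousFunction.toReal_lintegral_coe_eq_integral f (γ₂ : Measure X)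
  have fin1 : ∫⁻ x, (f x : ENNReal) ∂(γ₁ : Measure X) ≠ ⊤ :=
    (BoundedContinuousFunction.lintegral_lt_top_of_nnreal _ f).ne
  have fin2 : ∫⁻ x, (f x : ENNReal) ∂(γ₂ : Measure X) ≠ ⊤ :=
    (BoundedContinuousFunction.lintegral_lt_top_of_nnreal _ f).ne
  rw [← ENNReal.toReal_eq_toReal_iff' fin1 fin2] at *
  rw [h1, h2]
  simpa [st10phi] using key

lemma st10_cover {Γ : Set (ProbabilityMeasure X)} (hne : Γ.Nonempty) (hcomp : IsCompact Γ)
    {D : Set C(X, ℝ)} (hD : Dense D) {u : C(X, ℝ)}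
    (hu : ¬ ∃ γ₀ : ProbabilityMeasure X,
      {γ ∈ Γ | st10phi u γ = st10f Γ u} = {γ₀}) :
    ∃ g ∈ D, ∃ n : ℕ, u ∈ st10E Γ g n := by
  obtain ⟨γm, hγm, hmax⟩ := st10_exists_max hne hcomp u
  have hex : ∃ γ' : ProbabilityMeasure X, γ' ∈ Γ ∧ st10phi u γ' = st10f Γ u ∧ γ' ≠ γm := by
    by_contra hcon
    push_neg at hcon
    exact hu ⟨γm, subset_antisymm
      (fun γ hγ => by
        rcases eq_or_ne γ γm with h | h
        · exact h
        · exact absurd h (not_ne_iff.mpr (hcon γ hγ.1 hγ.2)))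
      (by rintro γ rfl; exact ⟨hγm, hmax⟩)⟩
  obtain ⟨γ', hγ', hmax', hne'⟩ := hex
  obtain ⟨h, hh⟩ := st10_distinguish γ' γm hne'
  -- order the pair so that the difference is positive
  obtain ⟨γ₁, γ₂, h1, h2, m1, m2, hcpos⟩ :
      ∃ γ₁ γ₂ : ProbabilityMeasure X, γ₁ ∈ Γ ∧ γ₂ ∈ Γ ∧ st10phi u γ₁ = st10f Γ u ∧
        st10phi u γ₂ = st10f Γ u ∧ 0 < st10phi h γ₁ - st10phi h γ₂ := by
    rcases lt_or_gt_of_ne hh with hlt | hgt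
    · exact ⟨γm, γ', hγm, hγ', hmax, hmax', by linarith⟩
    · exact ⟨γ', γm, hγ', hγm, hmax', hmax, by linarith⟩
  set c := st10phi h γ₁ - st10phi h γ₂ with hc
  obtain ⟨g, hgb, hgD⟩ := Metric.dense_iff.mp hD h (c/4) (by linarith)
  have hgh : ‖g - h‖ < c / 4 := by
    rw [← dist_eq_norm]
    exact Metric.mem_ball.mp hgb
  have e1 := abs_le.mp (st10phi_sub g h γ₁)
  have e2 := abs_le.mp (st10phi_sub g h γ₂)
  have hgap : c / 2 ≤ st10phi g γ₁ - st10phi g γ₂ := by linarith [e1.1, e1.2, e2.1, e2.2]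
  obtain ⟨n, hn⟩ := exists_nat_one_div_lt (show (0:ℝ) < c / 2 by linarith)
  exact ⟨g, hgD, n, γ₁, h1, γ₂, h2, m1, m2, by linarith⟩

end Stmt10Aux

/-- Theorem 1, infinite-dimensional part — for a nonempty compact
set `Γ` of Borel probability measures on a compact metric space `X` (weak
topology), the set of continuous utilities `u ∈ C(X, ℝ)` at which the
maximizer of `γ ↦ ∫ u dγ` over `Γ` is not unique is meagre in `C(X, ℝ)`. -/
theorem stmt10 {X : Type*} [MetricSpace X] [CompactSpace X]
    [MeasurableSpace X] [BorelSpace X]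
    (Γ : Set (ProbabilityMeasure X)) (hne : Γ.Nonempty) (hcomp : IsCompact Γ) :
    IsMeagre {u : C(X, ℝ) |
      ¬ ∃ γ₀ : ProbabilityMeasure X,
        {γ ∈ Γ | ∫ x, u x ∂(γ : Measure X)
          = sSup ((fun γ' : ProbabilityMeasure X =>
              ∫ x, u x ∂(γ' : Measure X)) '' Γ)} = {γ₀}} := by
  obtain ⟨D, hDc, hDd⟩ := TopologicalSpace.exists_countable_dense C(X, ℝ)
  rw [isMeagre_iff_countable_union_isNowhereDense]
  refine ⟨(fun p : C(X, ℝ) × ℕ => st10E Γ p.1 p.2) '' (D ×ˢ (Set.univ : Set ℕ)), ?_, ?_, ?_⟩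
  · rintro s ⟨⟨g, n⟩, ⟨hgD, -⟩, rfl⟩
    rw [IsNowhereDense, (st10E_closed hne hcomp g n).closure_eq]
    exact st10E_interior hne hcomp g n
  · exact (hDc.prod Set.countable_univ).image _
  · intro u hu
    have hu' : ¬ ∃ γ₀ : ProbabilityMeasure X,
        {γ ∈ Γ | st10phi u γ = st10f Γ u} = {γ₀} := hu
    obtain ⟨g, hgD, n, hE⟩ := st10_cover hne hcomp hDd hu'
    exact ⟨st10E Γ g n, ⟨(g, n), ⟨hgD, Set.mem_univ n⟩, rfl⟩, hE⟩
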